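/- For every integer k ≥ 1 and every z > 0, the steady-state densities satisfy the second-order ordinary differential equation 𝒜_k″(z) + ((n−1)/z) · 𝒜_k′(z) − 𝒜_k(z) + B · 𝒜_{k−1}(z) = 0, where primes denote derivatives with respect to z. -/

import Mathlib

open Real MeasureTheory Set

/-- The steady-state generation-`k` density in the normalized distance
`z = |x|√(λ/D)` from the origin:
`𝒜_k(z) = (μ(λB)^k/(k!(4πD)^{n/2})) ∫₀^∞ s^{k−n/2} exp(−λs − z²/(4λs)) ds`. -/
noncomputable def steadyDensity (n : ℕ) (lam D B mu : ℝ) (k : ℕ) (z : ℝ) : ℝ :=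
  (mu * (lam * B) ^ k / ((Nat.factorial k : ℝ) * (4 * π * D) ^ ((n : ℝ) / 2))) *
    ∫ s in Set.Ioi (0:ℝ),
      s ^ ((k : ℝ) - (n : ℝ) / 2) * Real.exp (-lam * s - z ^ 2 / (4 * lam * s))

open Filter Topology

section SteadyAux

lemma myPow_div_factorial_le_exp (x : ℝ) (hx : 0 ≤ x) (m : ℕ) :
    x ^ m / m.factorial ≤ Real.exp x := by
  calc x ^ m / m.factorial = ∑ i ∈ Finset.range (m+1), (if i = m then x^i / i.factorial else 0) := by
        simp
    _ ≤ ∑ i ∈ Finset.range (m+1), x^i / i.factorial := by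
        apply Finset.sum_le_sum
        intro i _
        split
        · exact le_rfl
        · positivity
    _ ≤ Real.exp x := Real.sum_le_exp_of_nonneg hx _

/-- key boundedness: `s^a * exp(-b*s - c/s) ≤ M` on `(0,∞)`. -/
lemma key_bound (a : ℝ) {b c : ℝ} (hb : 0 < b) (hc : 0 < c) :
    ∃ M : ℝ, 0 < M ∧ ∀ s ∈ Ioi (0:ℝ), s ^ a * Real.exp (-b*s - c/s) ≤ M := by
  obtain ⟨m, hm⟩ := exists_nat_ge |a|
  refine ⟨max ((m.factorial : ℝ) / b ^ m) ((m.factorial : ℝ) / c ^ m), by positivity, ?_⟩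
  intro s hs
  have hs0 : (0:ℝ) < s := hs
  rcases le_total s 1 with h1 | h1
  · -- small s : use exp(c/s) ≥ (c/s)^m / m!
    have hcs : (0:ℝ) < c / s := by positivity
    have he : (c/s)^m / m.factorial ≤ Real.exp (c/s) := myPow_div_factorial_le_exp _ hcs.le m
    have he' : Real.exp (-b*s - c/s) ≤ (m.factorial : ℝ) / (c/s)^m := by
      rw [div_le_iff₀ (by positivity)] at he
      rw [le_div_iff₀ (by positivity)]
      calc Real.exp (-b*s - c/s) * (c/s)^m ≤ Real.exp (-(c/s)) * (c/s)^m := by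
            have : Real.exp (-b*s - c/s) ≤ Real.exp (-(c/s)) :=
              Real.exp_le_exp.2 (by nlinarith)
            exact mul_le_mul_of_nonneg_right this (by positivity)
          _ = (c/s)^m / Real.exp (c/s) := by rw [Real.exp_neg]; ring
          _ ≤ (Real.exp (c/s) * (m.factorial:ℝ)) / Real.exp (c/s) := by gcongr
          _ = (m.factorial:ℝ) := by field_simp
    have hsa : s ^ a ≤ s ^ (-(m:ℝ)) := by
      apply Real.rpow_le_rpow_of_exponent_ge hs0 h1
      linarith [neg_abs_le a, hm]
    calc s ^ a * Real.exp (-b*s - c/s) ≤ s ^ (-(m:ℝ)) * ((m.factorial:ℝ) / (c/s)^m) := by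
          apply mul_le_mul hsa he' (Real.exp_pos _).le (by positivity)
      _ = (m.factorial : ℝ) / c ^ m := by
          rw [Real.rpow_neg hs0.le, Real.rpow_natCast, div_pow]
          field_simp
      _ ≤ _ := le_max_right _ _
  · -- large s
    have he : (b*s)^m / m.factorial ≤ Real.exp (b*s) := myPow_div_factorial_le_exp _ (by positivity) m
    have he' : Real.exp (-b*s - c/s) ≤ (m.factorial : ℝ) / (b*s)^m := by
      rw [div_le_iff₀ (by positivity)] at he
      rw [le_div_iff₀ (by positivity)]
      calc Real.exp (-b*s - c/s) * (b*s)^m ≤ Real.exp (-(b*s)) * (b*s)^m := by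
            have : Real.exp (-b*s - c/s) ≤ Real.exp (-(b*s)) :=
              Real.exp_le_exp.2 (by nlinarith [div_pos hc hs0])
            exact mul_le_mul_of_nonneg_right this (by positivity)
          _ = (b*s)^m / Real.exp (b*s) := by rw [Real.exp_neg]; ring
          _ ≤ (Real.exp (b*s) * (m.factorial:ℝ)) / Real.exp (b*s) := by gcongr
          _ = (m.factorial:ℝ) := by field_simp
    have hsa : s ^ a ≤ s ^ (m:ℝ) := by
      apply Real.rpow_le_rpow_of_exponent_le h1
      linarith [le_abs_self a, hm]
    calc s ^ a * Real.exp (-b*s - c/s) ≤ s ^ (m:ℝ) * ((m.factorial:ℝ) / (b*s)^m) := by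
          apply mul_le_mul hsa he' (Real.exp_pos _).le (by positivity)
      _ = (m.factorial : ℝ) / b ^ m := by
          rw [Real.rpow_natCast, mul_pow]
          field_simp
      _ ≤ _ := le_max_left _ _

noncomputable def SDf (lam a z s : ℝ) : ℝ := s ^ a * Real.exp (-lam * s - z ^ 2 / (4 * lam * s))
noncomputable def SDJ (lam a z : ℝ) : ℝ := ∫ s in Ioi (0:ℝ), SDf lam a z s

lemma SDf_nonneg (lam a z s : ℝ) (hs : 0 < s) : 0 ≤ SDf lam a z s := by
  unfold SDf; positivity

lemma SDf_contOn {lam : ℝ} (hlam : 0 < lam) (a z : ℝ) :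
    ContinuousOn (fun s => SDf lam a z s) (Ioi 0) := by
  intro s hs
  have hs0 : (0:ℝ) < s := hs
  apply ContinuousAt.continuousWithinAt
  apply ContinuousAt.mul
  · exact Real.continuousAt_rpow_const s a (Or.inl hs0.ne')
  · apply Real.continuous_exp.continuousAt.comp
    apply ContinuousAt.sub
    · exact continuousAt_const.mul continuousAt_id
    · exact continuousAt_const.div (by fun_prop) (by positivity)

lemma SDf_le {lam z : ℝ} (hlam : 0 < lam) (hz : 0 < z) (a : ℝ) :
    ∃ M : ℝ, 0 < M ∧ ∀ s ∈ Ioi (0:ℝ),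
      SDf lam a z s ≤ M * Real.exp (-(lam/2) * s) := by
  obtain ⟨M, hM, hMle⟩ := key_bound a (half_pos hlam) (show (0:ℝ) < z^2/(4*lam) by positivity)
  refine ⟨M, hM, fun s hs => ?_⟩
  have hs0 : (0:ℝ) < s := hs
  have key := hMle s hs
  have : SDf lam a z s = (s ^ a * Real.exp (-(lam/2)*s - (z^2/(4*lam))/s)) * Real.exp (-(lam/2)*s) := by
    unfold SDf
    conv_rhs => rw [mul_assoc, ← Real.exp_add]
    congr 2
    field_simp
    ring
  rw [this]
  exact mul_le_mul_of_nonneg_right key (Real.exp_pos _).le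

lemma SDf_integrable {lam z : ℝ} (hlam : 0 < lam) (hz : 0 < z) (a : ℝ) :
    IntegrableOn (SDf lam a z) (Ioi (0:ℝ)) := by
  obtain ⟨M, hM, hMle⟩ := SDf_le hlam hz a
  apply Integrable.mono' (g := fun s => M * Real.exp (-(lam/2) * s))
  · exact (exp_neg_integrableOn_Ioi 0 (half_pos hlam)).const_mul M
  · exact (SDf_contOn hlam a z).aestronglyMeasurable measurableSet_Ioi
  · filter_upwards [ae_restrict_mem measurableSet_Ioi] with s hs
    rw [Real.norm_eq_abs, abs_of_nonneg (SDf_nonneg _ _ _ _ hs)]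
    exact hMle s hs

lemma SDJ_hasDerivAt {lam z : ℝ} (hlam : 0 < lam) (hz : 0 < z) (a : ℝ) :
    HasDerivAt (fun w => SDJ lam a w) (-(z/(2*lam)) * SDJ lam (a-1) z) z := by
  have hball : ∀ w ∈ Metric.ball z (z/2), z/2 < w ∧ w < 3*z/2 := by
    intro w hw
    rw [Metric.mem_ball, Real.dist_eq, abs_lt] at hw
    constructor <;> linarith [hw.1, hw.2]
  have main := hasDerivAt_integral_of_dominated_loc_of_deriv_le
    (μ := volume.restrict (Ioi (0:ℝ)))
    (F := fun w s => SDf lam a w s)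
    (F' := fun w s => -(w/(2*lam)) * SDf lam (a-1) w s)
    (x₀ := z) (s := Metric.ball z (z/2)) (Metric.ball_mem_nhds z (half_pos hz))
    (bound := fun s => (z/lam) * SDf lam (a-1) (z/2) s)
    (Eventually.of_forall fun w =>
      (SDf_contOn hlam a w).aestronglyMeasurable measurableSet_Ioi)
    (SDf_integrable hlam hz a)
    (((SDf_contOn hlam (a-1) z).aestronglyMeasurable measurableSet_Ioi).const_mul _)
    ?_ ((SDf_integrable hlam (half_pos hz) (a-1)).const_mul _) ?_
  · rcases main with ⟨-, hd⟩
    have heq : (∫ s in Ioi (0:ℝ), -(z/(2*lam)) * SDf lam (a-1) z s)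
        = -(z/(2*lam)) * SDJ lam (a-1) z := integral_const_mul _ _
    rw [heq] at hd
    exact hd
  · -- bound
    filter_upwards [ae_restrict_mem measurableSet_Ioi] with s hs w hw
    have hs0 : (0:ℝ) < s := hs
    obtain ⟨hw1, hw2⟩ := hball w hw
    have hw0 : 0 < w := lt_trans (by positivity) hw1
    rw [Real.norm_eq_abs, abs_mul, abs_of_nonneg (SDf_nonneg _ _ _ _ hs0),
      abs_neg, abs_of_nonneg (by positivity : (0:ℝ) ≤ w/(2*lam))]
    have h1 : w/(2*lam) ≤ z/lam := by
      rw [div_le_div_iff₀ (by positivity) (by positivity)]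
      nlinarith
    have h2 : SDf lam (a-1) w s ≤ SDf lam (a-1) (z/2) s := by
      unfold SDf
      apply mul_le_mul_of_nonneg_left _ (by positivity)
      apply Real.exp_le_exp.2
      have h4 : (z/2)^2/(4*lam*s) ≤ w^2/(4*lam*s) := by
        have h5 : (z/2)^2 ≤ w^2 := by nlinarith
        gcongr
      linarith
    exact mul_le_mul h1 h2 (SDf_nonneg _ _ _ _ hs0) (by positivity)
  · -- differentiability
    filter_upwards [ae_restrict_mem measurableSet_Ioi] with s hs w hw
    have hs0 : (0:ℝ) < s := hs
    have h0 : HasDerivAt (fun w : ℝ => -lam*s - w^2/(4*lam*s))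
        (-(2*w/(4*lam*s))) w := by
      have := ((hasDerivAt_pow 2 w).div_const (4*lam*s)).const_sub (-lam*s)
      simpa using this
    have h1 := (h0.exp.const_mul (s ^ a))
    apply h1.congr_deriv; symm
    show -(w/(2*lam)) * SDf lam (a-1) w s = _
    unfold SDf
    rw [Real.rpow_sub hs0, Real.rpow_one]
    field_simp
    try ring

lemma SDf_hasDerivAt {lam z : ℝ} (hlam : 0 < lam) (hz : 0 < z) (a : ℝ)
    {s : ℝ} (hs0 : 0 < s) :
    HasDerivAt (fun t => SDf lam a z t)
      (a * SDf lam (a-1) z s - lam * SDf lam a z s + (z^2/(4*lam)) * SDf lam (a-2) z s) s := by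
  have hp : HasDerivAt (fun t : ℝ => t ^ a) (a * s ^ (a-1)) s :=
    Real.hasDerivAt_rpow_const (Or.inl hs0.ne')
  have hinner : HasDerivAt (fun t : ℝ => -lam * t - z^2/(4*lam*t))
      (-lam + (z^2/(4*lam)) * (s^2)⁻¹) s := by
    have h1 : HasDerivAt (fun t : ℝ => -lam * t) (-lam) s := by
      simpa using (hasDerivAt_id s).const_mul (-lam)
    have h2 : HasDerivAt (fun t : ℝ => (z^2/(4*lam)) * t⁻¹)
        ((z^2/(4*lam)) * (-(s^2)⁻¹)) s := (hasDerivAt_inv hs0.ne').const_mul _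
    have h3 := h1.fun_sub h2
    have heq : (fun t : ℝ => -lam * t - z^2/(4*lam)*t⁻¹)
        = fun t : ℝ => -lam * t - z^2/(4*lam*t) := by
      funext t; congr 1; ring
    rw [heq] at h3
    apply h3.congr_deriv
    ring
  have hq := hinner.exp
  have h := hp.fun_mul hq
  apply h.congr_deriv
  unfold SDf
  rw [Real.rpow_sub hs0, Real.rpow_sub hs0, Real.rpow_one, Real.rpow_two]
  field_simp
  ring

lemma SDJ_ibp {lam z : ℝ} (hlam : 0 < lam) (hz : 0 < z) (a : ℝ) :
    a * SDJ lam (a-1) z - lam * SDJ lam a z + (z^2/(4*lam)) * SDJ lam (a-2) z = 0 := by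
  set c : ℝ := z^2/(4*lam) with hc
  have hc0 : 0 < c := by positivity
  set g : ℝ → ℝ := fun s => if s ≤ 0 then 0 else SDf lam a z s with hg
  set φ : ℝ → ℝ := fun s =>
    a * SDf lam (a-1) z s - lam * SDf lam a z s + c * SDf lam (a-2) z s with hφ
  have hg0 : g 0 = 0 := by simp [hg]
  -- derivative
  have hderiv : ∀ s ∈ Ioi (0:ℝ), HasDerivAt g (φ s) s := by
    intro s hs
    have hs0 : (0:ℝ) < s := hs
    have heq : g =ᶠ[𝓝 s] fun t => SDf lam a z t := by
      filter_upwards [Ioi_mem_nhds hs0] with t ht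
      simp [hg, not_le.2 (show (0:ℝ) < t from ht)]
    exact ((SDf_hasDerivAt hlam hz a hs0).congr_of_eventuallyEq heq)
  -- integrability of φ
  have hφint : IntegrableOn φ (Ioi (0:ℝ)) := by
    apply Integrable.add
    · exact ((SDf_integrable hlam hz (a-1)).const_mul a).sub
        ((SDf_integrable hlam hz a).const_mul lam)
    · exact (SDf_integrable hlam hz (a-2)).const_mul c
  -- continuity at 0 from the right
  have hcont : ContinuousWithinAt g (Ici (0:ℝ)) 0 := by
    unfold ContinuousWithinAt
    rw [hg0, ← Set.Ioi_insert, nhdsWithin_insert, tendsto_sup]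
    constructor
    · rw [tendsto_pure_left]
      intro U hU
      simpa [hg0] using mem_of_mem_nhds hU
    · -- tendsto within Ioi 0
      obtain ⟨M, hM, hMle⟩ := key_bound a hlam (half_pos hc0)
      apply squeeze_zero' (g := fun s => M * Real.exp (-((c/2)/s)))
      · filter_upwards [self_mem_nhdsWithin] with s hs
        simp [hg, not_le.2 (show (0:ℝ) < s from hs), SDf_nonneg lam a z s hs]
      · filter_upwards [self_mem_nhdsWithin] with s hs
        have hs0 : (0:ℝ) < s := hs
        have : g s = (s ^ a * Real.exp (-lam*s - (c/2)/s)) * Real.exp (-((c/2)/s)) := by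
          simp only [hg, not_le.2 hs0, if_false]
          unfold SDf
          conv_rhs => rw [mul_assoc, ← Real.exp_add]
          congr 2
          rw [hc]
          field_simp
          ring
        rw [this]
        exact mul_le_mul_of_nonneg_right (hMle s hs) (Real.exp_pos _).le
      · have h1 : Tendsto (fun s : ℝ => (c/2)/s) (𝓝[>] 0) atTop := by
          have := tendsto_inv_nhdsGT_zero.const_mul_atTop (half_pos hc0)
          apply this.congr
          intro s; ring
        have h2 : Tendsto (fun s : ℝ => Real.exp (-((c/2)/s))) (𝓝[>] 0) (𝓝 0) :=
          Real.tendsto_exp_neg_atTop_nhds_zero.comp h1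
        simpa using h2.const_mul M
  -- tendsto at infinity
  have htop : Tendsto g atTop (𝓝 0) := by
    obtain ⟨M, hM, hMle⟩ := SDf_le hlam hz a
    apply squeeze_zero' (g := fun s => M * Real.exp (-(lam/2) * s))
    · filter_upwards [Ioi_mem_atTop (0:ℝ)] with s hs
      simp [hg, not_le.2 (show (0:ℝ) < s from hs), SDf_nonneg lam a z s hs]
    · filter_upwards [Ioi_mem_atTop (0:ℝ)] with s hs
      have hs0 : (0:ℝ) < s := hs
      simp only [hg, not_le.2 hs0, if_false]
      exact hMle s hs
    · have h1 : Tendsto (fun s : ℝ => -(lam/2) * s) atTop atBot :=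
        tendsto_id.const_mul_atTop_of_neg (by linarith) |>.congr (fun s => rfl)
      simpa using (Real.tendsto_exp_atBot.comp h1).const_mul M
  -- FTC
  have hint : ∫ s in Ioi (0:ℝ), φ s = 0 - g 0 :=
    integral_Ioi_of_hasDerivAt_of_tendsto hcont hderiv hφint htop
  rw [hg0, sub_zero] at hint
  have hexp : ∫ s in Ioi (0:ℝ), φ s
      = a * SDJ lam (a-1) z - lam * SDJ lam a z + c * SDJ lam (a-2) z := by
    have i1 : IntegrableOn (fun s => a * SDf lam (a-1) z s) (Ioi (0:ℝ)) :=
      (SDf_integrable hlam hz (a-1)).const_mul a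
    have i2 : IntegrableOn (fun s => lam * SDf lam a z s) (Ioi (0:ℝ)) :=
      (SDf_integrable hlam hz a).const_mul lam
    have i3 : IntegrableOn (fun s => c * SDf lam (a-2) z s) (Ioi (0:ℝ)) :=
      (SDf_integrable hlam hz (a-2)).const_mul c
    have i12 : IntegrableOn (fun s => a * SDf lam (a-1) z s - lam * SDf lam a z s) (Ioi (0:ℝ)) :=
      i1.sub i2
    unfold φ
    rw [integral_add i12 i3, integral_sub i1 i2,
      integral_const_mul, integral_const_mul, integral_const_mul]
    rfl
  rw [hexp] at hint
  exact hint
end SteadyAux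

/-- For `k ≥ 1` and `z > 0` the steady-state densities satisfy
`𝒜_k″(z) + ((n−1)/z) 𝒜_k′(z) − 𝒜_k(z) + B 𝒜_{k−1}(z) = 0`. -/
theorem steadyDensity_ode
    (n : ℕ) (hn : 1 ≤ n) (lam D B mu : ℝ)
    (hlam : 0 < lam) (hD : 0 < D) (hB : 0 < B) (hmu : 0 < mu)
    (k : ℕ) (hk : 1 ≤ k) (z : ℝ) (hz : 0 < z) :
    deriv (deriv (steadyDensity n lam D B mu k)) z
      + ((n : ℝ) - 1) / z * deriv (steadyDensity n lam D B mu k) z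
      - steadyDensity n lam D B mu k z
      + B * steadyDensity n lam D B mu (k - 1) z = 0 := by
  obtain ⟨m, rfl⟩ : ∃ m, k = m + 1 := ⟨k - 1, by omega⟩
  have hpi : (0:ℝ) < π := Real.pi_pos
  set P : ℝ := (4 * π * D) ^ ((n : ℝ)/2) with hPdef
  have hP : 0 < P := Real.rpow_pos_of_pos (by positivity) _
  set a : ℝ := ((m+1 : ℕ) : ℝ) - (n:ℝ)/2 with ha
  set C : ℝ := mu * (lam*B)^(m+1) / (((m+1).factorial : ℝ) * P) with hC
  set C' : ℝ := mu * (lam*B)^m / ((m.factorial : ℝ) * P) with hC'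
  have hSfun : steadyDensity n lam D B mu (m+1) = fun w => C * SDJ lam a w := rfl
  have hidx : ((m : ℕ) : ℝ) - (n:ℝ)/2 = a - 1 := by rw [ha]; push_cast; ring
  have hS'val : steadyDensity n lam D B mu (m+1-1) z = C' * SDJ lam (a-1) z := by
    show C' * SDJ lam (((m : ℕ) : ℝ) - (n:ℝ)/2) z = _
    rw [hidx]
  -- first derivative
  have h1 : HasDerivAt (steadyDensity n lam D B mu (m+1))
      (C * (-(z/(2*lam)) * SDJ lam (a-1) z)) z := by
    rw [hSfun]; exact (SDJ_hasDerivAt hlam hz a).const_mul C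
  have hd1 : deriv (steadyDensity n lam D B mu (m+1)) z
      = C * (-(z/(2*lam)) * SDJ lam (a-1) z) := h1.deriv
  -- the derivative as a function near z
  have hEv : deriv (steadyDensity n lam D B mu (m+1))
      =ᶠ[𝓝 z] fun w => C * (-(w/(2*lam)) * SDJ lam (a-1) w) := by
    filter_upwards [Ioi_mem_nhds hz] with w hw
    rw [hSfun]
    exact ((SDJ_hasDerivAt hlam hw a).const_mul C).deriv
  -- second derivative
  have hu : HasDerivAt (fun w : ℝ => -(w/(2*lam))) (-(1/(2*lam))) z := by
    simpa using ((hasDerivAt_id z).div_const (2*lam)).fun_neg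
  have hv := SDJ_hasDerivAt hlam hz (a-1)
  rw [show a-1-1 = a-2 from by ring] at hv
  have h2 : HasDerivAt (fun w => C * (-(w/(2*lam)) * SDJ lam (a-1) w))
      (C * (-(1/(2*lam)) * SDJ lam (a-1) z
        + -(z/(2*lam)) * (-(z/(2*lam)) * SDJ lam (a-2) z))) z :=
    (hu.mul hv).const_mul C
  have hd2 : deriv (deriv (steadyDensity n lam D B mu (m+1))) z
      = C * (-(1/(2*lam)) * SDJ lam (a-1) z
        + -(z/(2*lam)) * (-(z/(2*lam)) * SDJ lam (a-2) z)) := by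
    rw [hEv.deriv_eq]; exact h2.deriv
  -- assemble
  have key := SDJ_ibp hlam hz a
  have hSval : steadyDensity n lam D B mu (m+1) z = C * SDJ lam a z := rfl
  rw [hd1, hd2, hSval, hS'val]
  have hJ2 : SDJ lam (a-2) z
      = (lam * SDJ lam a z - a * SDJ lam (a-1) z) * (4*lam)/z^2 := by
    field_simp at key ⊢
    linarith
  rw [hJ2, hC, hC', ha]
  have hfac : (m.factorial : ℝ) ≠ 0 := Nat.cast_ne_zero.2 m.factorial_ne_zero
  have hm1 : ((m:ℝ) + 1) ≠ 0 := by positivity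
  push_cast [Nat.factorial_succ]
  field_simp
  ring
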